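/- Let H be a hybrid quantum–classical Hamiltonian on Fin n × Fin m, H = (Matrix.diagonal ε ⊗ₖ 1) + (1 ⊗ₖ H_Q) + ∑ i, (γ i : ℂ) • (Matrix.stdBasisMatrix i i 1 ⊗ₖ S i). For every o : Fin n → ℝ, every t : ℝ, and every complex matrix ρ indexed by Fin n × Fin m, the expectation value of the classical observable is invariant under the hybrid time evolution: Matrix.trace ((Matrix.diagonal o ⊗ₖ 1) * (Matrix.exp ℂ (-(t • Complex.I) • H) * ρ * Matrix.exp ℂ ((t • Complex.I) • H))) = Matrix.trace ((Matrix.diagonal o ⊗ₖ 1) * ρ). (Dynamical form of Theorem 1: the classical sector's observables are conserved quantities of every hybrid Hamiltonian evolution.) -/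

import Mathlib

open Matrix Kronecker

/-- Dynamical form of Theorem 1: the expectation value of any classical
observable is invariant under the hybrid Hamiltonian time evolution. -/
theorem classical_expectation_conserved_under_hybrid_evolution
    (n m : ℕ)
    (ε γ : Fin n → ℝ)
    (H_Q : Matrix (Fin m) (Fin m) ℂ)
    (S : Fin n → Matrix (Fin m) (Fin m) ℂ)
    (H : Matrix (Fin n × Fin m) (Fin n × Fin m) ℂ)
    (hH : H = (Matrix.diagonal (fun i => (ε i : ℂ)) ⊗ₖ 1)
        + ((1 : Matrix (Fin n) (Fin n) ℂ) ⊗ₖ H_Q)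
        + ∑ i : Fin n, (γ i : ℂ) • (Matrix.single i i 1 ⊗ₖ S i))
    (o : Fin n → ℝ) (t : ℝ)
    (ρ : Matrix (Fin n × Fin m) (Fin n × Fin m) ℂ) :
    Matrix.trace ((Matrix.diagonal (fun i => (o i : ℂ)) ⊗ₖ (1 : Matrix (Fin m) (Fin m) ℂ))
        * (NormedSpace.exp (-(t • Complex.I) • H) * ρ * NormedSpace.exp ((t • Complex.I) • H)))
      = Matrix.trace ((Matrix.diagonal (fun i => (o i : ℂ)) ⊗ₖ (1 : Matrix (Fin m) (Fin m) ℂ)) * ρ) := by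
  set O : Matrix (Fin n × Fin m) (Fin n × Fin m) ℂ :=
    Matrix.diagonal (fun i => (o i : ℂ)) ⊗ₖ (1 : Matrix (Fin m) (Fin m) ℂ) with hO
  have hcomm : Commute O H := by
    rw [hH]
    refine (Commute.add_right (Commute.add_right ?_ ?_) ?_)
    · show O * _ = _ * O
      rw [hO, ← Matrix.mul_kronecker_mul, ← Matrix.mul_kronecker_mul,
        Matrix.diagonal_mul_diagonal, Matrix.diagonal_mul_diagonal, one_mul]
      simp [mul_comm]
    · show O * _ = _ * O
      rw [hO, ← Matrix.mul_kronecker_mul, ← Matrix.mul_kronecker_mul,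
        Matrix.mul_one, Matrix.one_mul, Matrix.mul_one, Matrix.one_mul]
    · refine Commute.sum_right _ _ _ fun i _ => Commute.smul_right ?_ _
      show O * _ = _ * O
      rw [hO, ← Matrix.mul_kronecker_mul, ← Matrix.mul_kronecker_mul,
        Matrix.mul_one, Matrix.one_mul]
      ext a b
      simp [Matrix.diagonal_mul, Matrix.mul_diagonal, Matrix.single, Matrix.of_apply]
      aesop
  have hc2 : Commute O ((t • Complex.I) • H) := hcomm.smul_right _
  have he2 : Commute O (NormedSpace.exp ((t • Complex.I) • H)) := hc2.exp_right
  have hinv : NormedSpace.exp ((t • Complex.I) • H) *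
      NormedSpace.exp (-(t • Complex.I) • H) = 1 := by
    rw [neg_smul, ← Matrix.exp_add_of_commute _ _ ((Commute.refl ((t • Complex.I) • H)).neg_right), add_neg_cancel,
      NormedSpace.exp_zero]
  have key : NormedSpace.exp ((t • Complex.I) • H) *
      (O * (NormedSpace.exp (-(t • Complex.I) • H) * ρ)) = O * ρ := by
    rw [← Matrix.mul_assoc, ← he2.eq, Matrix.mul_assoc O, ← Matrix.mul_assoc
      (NormedSpace.exp ((t • Complex.I) • H)), hinv, Matrix.one_mul]
  calc Matrix.trace (O * (NormedSpace.exp (-(t • Complex.I) • H) * ρ *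
        NormedSpace.exp ((t • Complex.I) • H)))
      = Matrix.trace ((O * (NormedSpace.exp (-(t • Complex.I) • H) * ρ)) *
        NormedSpace.exp ((t • Complex.I) • H)) := by
        rw [← Matrix.mul_assoc]
    _ = Matrix.trace (NormedSpace.exp ((t • Complex.I) • H) *
        (O * (NormedSpace.exp (-(t • Complex.I) • H) * ρ))) := Matrix.trace_mul_comm _ _
    _ = Matrix.trace (O * ρ) := by rw [key]
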